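/- Let (C, S, W) be a left Cartan-Eilenberg category. Then the inclusion functor i : C_cof[S⁻¹, C] → C[S⁻¹] admits a right adjoint r, with counit ε' : i∘r ⟹ 1, such that a morphism of C[S⁻¹] lies in the saturation of δ(W) if and only if r sends it to an isomorphism, and r∗ε' is an isomorphism. In particular C_cof[S⁻¹, C] is a coreflective subcategory of C[S⁻¹]. -/

import Mathlib

open CategoryTheory

universe v u

variable {C : Type u} [Category.{v} C]

/-- `(C, S, W)` is a category with strong and weak equivalences. -/
structure StrongWeak (S W : MorphismProperty C) : Prop where
  comp_S : ∀ ⦃X Y Z : C⦄ (f : X ⟶ Y) (g : Y ⟶ Z), S f → S g → S (f ≫ g)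
  comp_W : ∀ ⦃X Y Z : C⦄ (f : X ⟶ Y) (g : Y ⟶ Z), W f → W g → W (f ≫ g)
  iso_S : ∀ ⦃X Y : C⦄ (f : X ⟶ Y), IsIso f → S f
  iso_W : ∀ ⦃X Y : C⦄ (f : X ⟶ Y), IsIso f → W f
  le_sat : ∀ ⦃X Y : C⦄ (f : X ⟶ Y), S f → IsIso (W.Q.map f)

/-- An object `M` is `(S, W)`-cofibrant. -/
def Cofibrant (S W : MorphismProperty C) (M : C) : Prop :=
  ∀ ⦃Y X : C⦄ (w : Y ⟶ X), W w →
    Function.Bijective (fun g : S.Q.obj M ⟶ S.Q.obj Y => g ≫ S.Q.map w)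

/-- The canonical functor `γ' : C[S⁻¹] ⥤ C[W⁻¹]`. -/
noncomputable def gammaPrime (S W : MorphismProperty C)
    (h : ∀ ⦃X Y : C⦄ (f : X ⟶ Y), S f → IsIso (W.Q.map f)) :
    S.Localization ⥤ W.Localization :=
  Localization.Construction.lift W.Q (fun _ _ f hf => h f hf)

/-- `(C, S, W)` is a left Cartan-Eilenberg category. -/
def LeftCE (S W : MorphismProperty C)
    (h : ∀ ⦃X Y : C⦄ (f : X ⟶ Y), S f → IsIso (W.Q.map f)) : Prop :=
  ∀ X : C, ∃ (M : C) (ε : S.Q.obj M ⟶ S.Q.obj X),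
    Cofibrant S W M ∧ IsIso ((gammaPrime S W h).map ε)

/-- The relative localisation `C_cof[S⁻¹, C]`. -/
@[nolint unusedArguments]
noncomputable def relLocCof (S W : MorphismProperty C) :=
  InducedCategory S.Localization
    (fun M : {M : C // Cofibrant S W M} => S.Q.obj M.1)

noncomputable instance (S W : MorphismProperty C) : Category (relLocCof S W) :=
  InducedCategory.instCategory

section Aux

variable (S W : MorphismProperty C)
  (h : ∀ ⦃X Y : C⦄ (f : X ⟶ Y), S f → IsIso (W.Q.map f))

/-- If `M` is cofibrant, then `Hom(M, -)` inverts every morphism of `C[S⁻¹]` which becomes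
invertible in `C[W⁻¹]`. -/
lemma cofibrant_bij {M : C} (hM : Cofibrant S W M) {X Y : S.Localization}
    (φ : X ⟶ Y) (hφ : IsIso ((gammaPrime S W h).map φ)) :
    Function.Bijective (fun g : S.Q.obj M ⟶ X => g ≫ φ) := by
  let F := coyoneda.obj (Opposite.op (S.Q.obj M))
  have hinv : W.IsInvertedBy (S.Q ⋙ F) := by
    intro A B w hw
    rw [isIso_iff_bijective]
    exact hM w hw
  let G := Localization.Construction.lift (S.Q ⋙ F) hinv
  have h1 : S.Q ⋙ gammaPrime S W h = W.Q := Localization.Construction.fac _ _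
  have h2 : W.Q ⋙ G = S.Q ⋙ F := Localization.Construction.fac _ _
  have h3 : gammaPrime S W h ⋙ G = F := by
    apply Localization.Construction.uniq
    rw [← Functor.assoc, h1, h2]
  have h4 : IsIso (F.map φ) := by
    rw [Functor.congr_hom h3.symm φ]
    dsimp only [Functor.comp_map]
    infer_instance
  exact (isIso_iff_bijective (F.map φ)).1 h4

/-- Whitehead-type lemma: a map between cofibrant objects inverted by `γ'` is invertible. -/
lemma whitehead {M N : C} (hM : Cofibrant S W M) (hN : Cofibrant S W N)
    (g : S.Q.obj M ⟶ S.Q.obj N) (hg : IsIso ((gammaPrime S W h).map g)) : IsIso g := by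
  obtain ⟨k, hk⟩ := (cofibrant_bij S W h hN g hg).2 (𝟙 _)
  have hk' : k ≫ g = 𝟙 _ := hk
  have hgk : g ≫ k = 𝟙 _ := by
    apply (cofibrant_bij S W h hM g hg).1
    show (g ≫ k) ≫ g = 𝟙 _ ≫ g
    rw [Category.assoc, hk', Category.comp_id, Category.id_comp]
  exact ⟨k, hgk, hk'⟩

variable (Mo : C → C) (ε : ∀ X : C, S.Q.obj (Mo X) ⟶ S.Q.obj X)
  (hcof : ∀ X, Cofibrant S W (Mo X))
  (hiso : ∀ X, IsIso ((gammaPrime S W h).map (ε X)))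

/-- The inclusion functor. -/
noncomputable abbrev incl : relLocCof S W ⥤ S.Localization :=
  inducedFunctor (fun M : {M : C // Cofibrant S W M} => S.Q.obj M.1)

/-- The object of `C` underlying an object of the localization. -/
noncomputable def cObj (X : S.Localization) : C :=
  (Localization.Construction.objEquiv S).symm X

lemma Q_cObj (X : S.Localization) : S.Q.obj (cObj S X) = X :=
  (Localization.Construction.objEquiv S).apply_symm_apply X

/-- The coreflection on objects. -/
noncomputable def Gobj (X : S.Localization) : relLocCof S W :=
  show {M : C // Cofibrant S W M} from ⟨Mo (cObj S X), hcof (cObj S X)⟩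

/-- The counit morphism. -/
noncomputable def εhat (X : S.Localization) :
    (incl S W).obj (Gobj S W Mo hcof X) ⟶ X :=
  ε (cObj S X) ≫ eqToHom (Q_cObj S X)

include h hiso in
lemma εhat_iso (X : S.Localization) :
    IsIso ((gammaPrime S W h).map (εhat S W Mo ε hcof X)) := by
  show IsIso ((gammaPrime S W h).map (ε (cObj S X) ≫ eqToHom (Q_cObj S X)))
  rw [Functor.map_comp]
  have := hiso (cObj S X)
  infer_instance

/-- The adjunction hom-equivalence. -/
noncomputable def eEquiv (A : relLocCof S W) (X : S.Localization) :
    ((incl S W).obj A ⟶ X) ≃ (A ⟶ Gobj S W Mo hcof X) :=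
  (Equiv.ofBijective
    (fun g : S.Q.obj A.1 ⟶ S.Q.obj (Mo (cObj S X)) => g ≫ εhat S W Mo ε hcof X)
    (cofibrant_bij S W h A.2 _ (εhat_iso S W h Mo ε hcof hiso X))).symm.trans
      (InducedCategory.homEquiv (X := A) (Y := Gobj S W Mo hcof X)).symm

lemma eEquiv_comp (A : relLocCof S W) (X : S.Localization) (g : (incl S W).obj A ⟶ X) :
    (incl S W).map (eEquiv S W h Mo ε hcof hiso A X g) ≫ εhat S W Mo ε hcof X = g :=
  Equiv.symm_apply_apply (eEquiv S W h Mo ε hcof hiso A X) g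

lemma he (A' A : relLocCof S W) (X : S.Localization) (f : A' ⟶ A)
    (g : (incl S W).obj A ⟶ X) :
    eEquiv S W h Mo ε hcof hiso A' X ((incl S W).map f ≫ g) =
      f ≫ eEquiv S W h Mo ε hcof hiso A X g := by
  apply (eEquiv S W h Mo ε hcof hiso A' X).symm.injective
  rw [Equiv.symm_apply_apply]
  show (incl S W).map f ≫ g =
    ((incl S W).map f ≫ (incl S W).map (eEquiv S W h Mo ε hcof hiso A X g)) ≫
      εhat S W Mo ε hcof X
  rw [Category.assoc, eEquiv_comp]

/-- The coreflection functor. -/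
noncomputable def rFun : S.Localization ⥤ relLocCof S W :=
  Adjunction.rightAdjointOfEquiv (eEquiv S W h Mo ε hcof hiso) (he S W h Mo ε hcof hiso)

/-- The adjunction. -/
noncomputable def adjCE : incl S W ⊣ rFun S W h Mo ε hcof hiso :=
  Adjunction.adjunctionOfEquivRight _ _

lemma counit_eq (X : S.Localization) :
    (adjCE S W h Mo ε hcof hiso).counit.app X = εhat S W Mo ε hcof X := by
  show (eEquiv S W h Mo ε hcof hiso _ X).symm (𝟙 _) = _
  show (𝟙 ((incl S W).obj (Gobj S W Mo hcof X))) ≫ εhat S W Mo ε hcof X = _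
  rw [Category.id_comp]

end Aux

theorem coreflective_of_leftCE (S W : MorphismProperty C) (hsw : StrongWeak S W)
    (hce : LeftCE S W hsw.le_sat) :
    ∃ (r : S.Localization ⥤ relLocCof S W)
      (adj : (inducedFunctor (fun M : {M : C // Cofibrant S W M} => S.Q.obj M.1)) ⊣ r),
      (∀ ⦃X Y : S.Localization⦄ (f : X ⟶ Y),
        (IsIso ((gammaPrime S W hsw.le_sat).map f) ↔ IsIso (r.map f))) ∧
      (∀ X : S.Localization, IsIso (r.map (adj.counit.app X))) := by
  classical
  obtain ⟨Mo, ε, hcof, hiso⟩ :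
      ∃ (Mo : C → C) (ε : ∀ X : C, S.Q.obj (Mo X) ⟶ S.Q.obj X),
        (∀ X, Cofibrant S W (Mo X)) ∧
        (∀ X, IsIso ((gammaPrime S W hsw.le_sat).map (ε X))) := by
    choose Mo ε h1 h2 using hce
    exact ⟨Mo, ε, h1, h2⟩
  set h := hsw.le_sat with hh
  let r := rFun S W h Mo ε hcof hiso
  let adj := adjCE S W h Mo ε hcof hiso
  have hγc : ∀ Z, IsIso ((gammaPrime S W h).map (adj.counit.app Z)) := by
    intro Z
    rw [counit_eq]
    exact εhat_iso S W h Mo ε hcof hiso Z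
  have key : ∀ ⦃X Y : S.Localization⦄ (f : X ⟶ Y),
      IsIso ((gammaPrime S W h).map f) ↔ IsIso (r.map f) := by
    intro X Y f
    have hnat : (incl S W).map (r.map f) ≫ adj.counit.app Y = adj.counit.app X ≫ f := by
      simpa using adj.counit.naturality f
    have := hγc X
    have := hγc Y
    constructor
    · intro hf
      have e1 : (gammaPrime S W h).map ((incl S W).map (r.map f)) =
          (gammaPrime S W h).map (adj.counit.app X) ≫ (gammaPrime S W h).map f ≫
            inv ((gammaPrime S W h).map (adj.counit.app Y)) := by
        rw [← cancel_mono ((gammaPrime S W h).map (adj.counit.app Y))]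
        simp only [Category.assoc, IsIso.inv_hom_id, Category.comp_id]
        rw [← Functor.map_comp, ← Functor.map_comp, hnat]
      have h2 : IsIso ((gammaPrime S W h).map ((incl S W).map (r.map f))) := by
        rw [e1]; infer_instance
      have h3 : IsIso ((incl S W).map (r.map f)) :=
        whitehead S W h (hcof (cObj S X)) (hcof (cObj S Y)) _ h2
      obtain ⟨g, hg1, hg2⟩ := h3
      exact ⟨InducedCategory.homMk g, InducedCategory.hom_ext hg1, InducedCategory.hom_ext hg2⟩
    · intro hrf
      have h3 : IsIso ((gammaPrime S W h).map ((incl S W).map (r.map f))) := by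
        infer_instance
      have e2 : (gammaPrime S W h).map f =
          inv ((gammaPrime S W h).map (adj.counit.app X)) ≫
            (gammaPrime S W h).map ((incl S W).map (r.map f)) ≫
              (gammaPrime S W h).map (adj.counit.app Y) := by
        rw [IsIso.eq_inv_comp, ← Functor.map_comp, ← Functor.map_comp, hnat]
      rw [e2]; infer_instance
  exact ⟨r, adj, key, fun X => (key (adj.counit.app X)).1 (hγc X)⟩
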